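/- The function 1/ζ(s) is unbounded on the half plane Re(s) > 1: for every real number C > 0 there exists a complex number s with Re(s) > 1 and |1/ζ(s)| > C (equivalently, |ζ(s)| < 1/C). -/

import Mathlib

open Complex Finset intervalIntegral

lemma coeff_bound {ι : Type*} [DecidableEq ι] (s : Finset ι) (lam : ι → ℝ)
    (hinj : Set.InjOn lam s) (c : ι → ℂ) {M : ℝ}
    (hM : ∀ t : ℝ, ‖∑ i ∈ s, c i * Complex.exp ((lam i : ℂ) * t * Complex.I)‖ ≤ M)
    {i₀ : ι} (hi₀ : i₀ ∈ s) : ‖c i₀‖ ≤ M := by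
  set F : ℝ → ℂ := fun t => ∑ i ∈ s, c i * Complex.exp ((lam i : ℂ) * t * Complex.I) with hF
  set E : ℝ := ∑ i ∈ s.erase i₀, ‖c i‖ * (2 / |lam i - lam i₀|) with hE
  have hE0 : 0 ≤ E := Finset.sum_nonneg fun i _ => by positivity
  have key : ∀ T : ℝ, 0 < T → ‖c i₀‖ * T ≤ M * T + E := by
    intro T hT
    -- the integral J
    set J : ℂ := ∫ t in (0:ℝ)..T, F t * Complex.exp (-(lam i₀ : ℂ) * t * Complex.I) with hJ
    have hcont : ∀ i : ι, Continuous fun t : ℝ =>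
        c i * Complex.exp (((lam i - lam i₀ : ℝ) : ℂ) * t * Complex.I) := by
      intro i; fun_prop
    have hintegrand : ∀ t : ℝ, F t * Complex.exp (-(lam i₀ : ℂ) * t * Complex.I)
        = ∑ i ∈ s, c i * Complex.exp (((lam i - lam i₀ : ℝ) : ℂ) * t * Complex.I) := by
      intro t
      rw [hF, Finset.sum_mul]
      refine Finset.sum_congr rfl fun i _ => ?_
      rw [mul_assoc, ← Complex.exp_add]
      push_cast
      ring_nf
    have hJeq : J = c i₀ * T + ∑ i ∈ s.erase i₀,
        c i * ((Complex.exp (((lam i - lam i₀ : ℝ) : ℂ) * Complex.I * T) - 1)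
          / (((lam i - lam i₀ : ℝ) : ℂ) * Complex.I)) := by
      rw [hJ]
      calc (∫ t in (0:ℝ)..T, F t * Complex.exp (-(lam i₀ : ℂ) * t * Complex.I))
          = ∫ t in (0:ℝ)..T, ∑ i ∈ s,
              c i * Complex.exp (((lam i - lam i₀ : ℝ) : ℂ) * t * Complex.I) := by
            simp_rw [hintegrand]
        _ = ∑ i ∈ s, ∫ t in (0:ℝ)..T,
              c i * Complex.exp (((lam i - lam i₀ : ℝ) : ℂ) * t * Complex.I) := by
            apply intervalIntegral.integral_finset_sum
            exact fun i _ => (hcont i).intervalIntegrable _ _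
        _ = _ := by
          rw [← Finset.add_sum_erase _ _ hi₀]
          congr 1
          · rw [sub_self]
            push_cast
            simp [mul_comm]
          · refine Finset.sum_congr rfl fun i hi => ?_
            rw [intervalIntegral.integral_const_mul]
            congr 1
            have hμ : ((lam i - lam i₀ : ℝ) : ℂ) * Complex.I ≠ 0 := by
              have : lam i - lam i₀ ≠ 0 := by
                have := hinj.ne (Finset.mem_of_mem_erase hi) hi₀ (Finset.ne_of_mem_erase hi)
                intro h; exact this (by linarith [sub_eq_zero.mp h])
              simp [Complex.ext_iff, this, Complex.I_ne_zero]
            simp_rw [show ∀ t : ℝ, ((lam i - lam i₀ : ℝ) : ℂ) * (t:ℂ) * Complex.I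
                = (((lam i - lam i₀ : ℝ) : ℂ) * Complex.I) * (t:ℂ) from fun t => by ring,
              integral_exp_mul_complex hμ]
            norm_num
    -- bound on ‖J‖
    have hJbound : ‖J‖ ≤ M * T := by
      have : ‖J‖ ≤ M * |T - 0| := by
        apply intervalIntegral.norm_integral_le_of_norm_le_const
        intro t _
        rw [norm_mul]
        have h1 : ‖Complex.exp (-(lam i₀ : ℂ) * t * Complex.I)‖ = 1 := by
          rw [Complex.norm_exp]
          simp
        rw [h1, mul_one]
        exact hM t
      simpa [abs_of_pos hT] using this
    -- bound on error terms
    have herr : ∀ i ∈ s.erase i₀,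
        ‖c i * ((Complex.exp (((lam i - lam i₀ : ℝ) : ℂ) * Complex.I * T) - 1)
          / (((lam i - lam i₀ : ℝ) : ℂ) * Complex.I))‖ ≤ ‖c i‖ * (2 / |lam i - lam i₀|) := by
      intro i hi
      rw [norm_mul]
      gcongr
      rw [norm_div]
      have hden : ‖((lam i - lam i₀ : ℝ) : ℂ) * Complex.I‖ = |lam i - lam i₀| := by
        rw [norm_mul, Complex.norm_I, mul_one, Complex.norm_real, Real.norm_eq_abs]
      rw [hden]
      have hne : lam i ≠ lam i₀ :=
        hinj.ne (Finset.mem_of_mem_erase hi) hi₀ (Finset.ne_of_mem_erase hi)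
      have hpos : (0:ℝ) < |lam i - lam i₀| := abs_pos.mpr (sub_ne_zero.mpr hne)
      refine div_le_div₀ (by norm_num) ?_ hpos le_rfl
      calc ‖Complex.exp (((lam i - lam i₀ : ℝ) : ℂ) * Complex.I * T) - 1‖
          ≤ ‖Complex.exp (((lam i - lam i₀ : ℝ) : ℂ) * Complex.I * T)‖ + 1 := by
            simpa using norm_sub_le _ (1:ℂ)
        _ ≤ 2 := by
            rw [Complex.norm_exp]
            norm_num
    calc ‖c i₀‖ * T = ‖c i₀ * T‖ := by
          rw [norm_mul, Complex.norm_real, Real.norm_eq_abs, abs_of_pos hT]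
      _ = ‖J - ∑ i ∈ s.erase i₀,
            c i * ((Complex.exp (((lam i - lam i₀ : ℝ) : ℂ) * Complex.I * T) - 1)
              / (((lam i - lam i₀ : ℝ) : ℂ) * Complex.I))‖ := by rw [hJeq]; congr 1; ring
      _ ≤ ‖J‖ + ‖∑ i ∈ s.erase i₀,
            c i * ((Complex.exp (((lam i - lam i₀ : ℝ) : ℂ) * Complex.I * T) - 1)
              / (((lam i - lam i₀ : ℝ) : ℂ) * Complex.I))‖ := norm_sub_le _ _
      _ ≤ M * T + E := by
          gcongr
          exact (norm_sum_le _ _).trans (Finset.sum_le_sum herr)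
  -- conclude
  refine le_of_forall_pos_le_add fun δ hδ => ?_
  have hT : (0:ℝ) < E / δ + 1 := by positivity
  have h1 := key (E / δ + 1) hT
  have h2 : E / (E / δ + 1) ≤ δ := by
    rw [div_le_iff₀ hT]
    have : 0 ≤ δ * (E / δ) := by positivity
    calc E = δ * (E / δ) := by field_simp
      _ ≤ δ * (E / δ) + δ := by linarith
      _ = δ * (E / δ + 1) := by ring
  have := (div_le_div_iff_of_pos_right hT).mpr h1
  calc ‖c i₀‖ = ‖c i₀‖ * (E / δ + 1) / (E / δ + 1) :=
        (mul_div_cancel_right₀ _ hT.ne').symm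
    _ ≤ (M * (E / δ + 1) + E) / (E / δ + 1) := by gcongr
    _ = M + E / (E / δ + 1) := by
        rw [add_div, mul_div_cancel_right₀ _ hT.ne']
    _ ≤ M + δ := by linarith


lemma kronecker (S : Finset Nat.Primes) {ε : ℝ} (hε : 0 < ε) :
    ∃ t : ℝ, ∀ p ∈ S, ‖Complex.exp ((Real.log p : ℂ) * t * Complex.I) + 1‖ < ε := by
  by_contra hcon
  push_neg at hcon
  -- ε ≤ 2 and S nonempty
  obtain ⟨p₀, hp₀, hεle⟩ := hcon 0
  have hε2 : ε ≤ 2 := by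
    refine hεle.trans ?_
    calc ‖Complex.exp ((Real.log p₀ : ℂ) * 0 * Complex.I) + 1‖
        = ‖(1 : ℂ) + 1‖ := by norm_num
      _ ≤ 2 := by norm_num
  set k : ℕ := S.card with hk
  have hk1 : 1 ≤ k := Finset.card_pos.mpr ⟨p₀, hp₀⟩
  set e : Nat.Primes → ℝ → ℂ := fun p t => Complex.exp ((Real.log p : ℂ) * t * Complex.I)
    with he
  have habs : ∀ (p : Nat.Primes) (t : ℝ), ‖e p t‖ = 1 := by
    intro p t
    rw [he]
    have h : (Real.log p : ℂ) * t * Complex.I = ((Real.log p * t : ℝ) : ℂ) * Complex.I := by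
      push_cast; ring
    simp only [h]
    rw [Complex.norm_exp_ofReal_mul_I]
  set M : ℝ := Real.sqrt (4 - ε ^ 2) * 2 ^ (k - 1) with hM
  have h4ε : (0:ℝ) ≤ 4 - ε ^ 2 := by nlinarith
  have hM0 : 0 ≤ M := by positivity
  -- Step A : uniform bound on the product
  have hfM : ∀ t : ℝ, ‖∏ p : ↥S, (1 - e p t)‖ ≤ M := by
    intro t
    obtain ⟨q, hq, hqε⟩ := hcon t
    have hq' : (⟨q, hq⟩ : ↥S) ∈ (Finset.univ : Finset ↥S) := Finset.mem_univ _
    rw [norm_prod]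
    rw [← Finset.mul_prod_erase _ _ hq']
    have hfac1 : ‖1 - e q t‖ ≤ Real.sqrt (4 - ε ^ 2) := by
      have hsq : ‖1 - e q t‖ ^ 2 + ‖1 + e q t‖ ^ 2 = 4 := by
        have h1 := habs q t
        have h2 := parallelogram_law_with_norm ℝ (1 : ℂ) (e q t)
        rw [h1, norm_one] at h2
        nlinarith [h2]
      have h2 : ‖1 - e q t‖ ^ 2 ≤ 4 - ε ^ 2 := by
        have : ε ^ 2 ≤ ‖1 + e q t‖ ^ 2 := by
          have h3 : ε ≤ ‖1 + e q t‖ := by rw [add_comm]; exact hqε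
          nlinarith [norm_nonneg (1 + e q t)]
        linarith
      calc ‖1 - e q t‖ = Real.sqrt (‖1 - e q t‖ ^ 2) :=
            (Real.sqrt_sq (norm_nonneg _)).symm
        _ ≤ Real.sqrt (4 - ε ^ 2) := Real.sqrt_le_sqrt h2
    have hfac2 : ∏ p ∈ (Finset.univ : Finset ↥S).erase ⟨q, hq⟩, ‖1 - e p t‖
        ≤ 2 ^ (k - 1) := by
      calc ∏ p ∈ (Finset.univ : Finset ↥S).erase ⟨q, hq⟩, ‖1 - e p t‖
          ≤ ∏ _p ∈ (Finset.univ : Finset ↥S).erase ⟨q, hq⟩, (2:ℝ) := by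
            apply Finset.prod_le_prod (fun _ _ => norm_nonneg _)
            intro p _
            calc ‖1 - e (p:Nat.Primes) t‖ ≤ ‖(1:ℂ)‖ + ‖e (p:Nat.Primes) t‖ := norm_sub_le _ _
              _ = 2 := by rw [habs, norm_one]; norm_num
        _ = 2 ^ (k - 1) := by
            rw [Finset.prod_const, Finset.card_erase_of_mem hq', Finset.card_univ,
              Fintype.card_coe]
    calc ‖1 - e q t‖ * ∏ p ∈ (Finset.univ : Finset ↥S).erase ⟨q, hq⟩, ‖1 - e p t‖
        ≤ Real.sqrt (4 - ε ^ 2) * 2 ^ (k - 1) := by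
          apply mul_le_mul hfac1 hfac2 (Finset.prod_nonneg fun _ _ => norm_nonneg _)
            (Real.sqrt_nonneg _)
      _ = M := rfl
  classical
  -- frequencies and coefficients
  set lam : (↥S → ℕ) → ℝ :=
    fun g => ∑ p : ↥S, (g p : ℝ) * Real.log ((p : Nat.Primes) : ℕ) with hlam
  -- Step B : expansion of the N-th power
  have hexp : ∀ (N : ℕ) (t : ℝ), (∏ p : ↥S, (1 - e p t)) ^ N
      = ∑ g ∈ Fintype.piFinset (fun _ : ↥S => Finset.range (N + 1)),
          (∏ p : ↥S, ((-1 : ℂ) ^ g p * (N.choose (g p) : ℂ)))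
            * Complex.exp ((lam g : ℂ) * t * Complex.I) := by
    intro N t
    have h1 : ∀ p : ↥S, (1 - e (p : Nat.Primes) t) ^ N
        = ∑ a ∈ Finset.range (N + 1), ((-1 : ℂ) ^ a * (N.choose a : ℂ))
            * Complex.exp ((((a : ℝ) * Real.log ((p : Nat.Primes) : ℕ)) : ℝ) * t * Complex.I) := by
      intro p
      have h0 : (1 : ℂ) - e (p : Nat.Primes) t = (- e (p : Nat.Primes) t) + 1 := by ring
      rw [h0, add_pow]
      refine Finset.sum_congr rfl fun a _ => ?_
      have hea : e (p : Nat.Primes) t ^ a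
          = Complex.exp ((((a : ℝ) * Real.log ((p : Nat.Primes) : ℕ)) : ℝ) * t * Complex.I) := by
        rw [he, ← Complex.exp_nat_mul]
        congr 1
        push_cast
        ring
      rw [one_pow, mul_one, neg_pow, hea]
      ring
    calc (∏ p : ↥S, (1 - e (p : Nat.Primes) t)) ^ N
        = ∏ p : ↥S, (1 - e (p : Nat.Primes) t) ^ N := by rw [Finset.prod_pow]
      _ = ∏ p : ↥S, ∑ a ∈ Finset.range (N + 1), ((-1 : ℂ) ^ a * (N.choose a : ℂ))
            * Complex.exp ((((a : ℝ) * Real.log ((p : Nat.Primes) : ℕ)) : ℝ) * t * Complex.I) :=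
          Finset.prod_congr rfl fun p _ => h1 p
      _ = ∑ g ∈ Fintype.piFinset (fun _ : ↥S => Finset.range (N + 1)),
            ∏ p : ↥S, (((-1 : ℂ) ^ g p * (N.choose (g p) : ℂ))
              * Complex.exp ((((g p : ℝ) * Real.log ((p : Nat.Primes) : ℕ)) : ℝ) * t * Complex.I)) :=
          Finset.prod_univ_sum _ _
      _ = _ := by
          refine Finset.sum_congr rfl fun g _ => ?_
          rw [Finset.prod_mul_distrib]
          congr 1
          rw [← Complex.exp_sum]
          congr 1
          rw [hlam]
          push_cast
          rw [Finset.sum_mul, Finset.sum_mul]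
  -- Step C : injectivity of the frequencies
  have hinj : ∀ N : ℕ,
      Set.InjOn lam (Fintype.piFinset (fun _ : ↥S => Finset.range (N + 1))) := by
    intro N g hg h hh hgh
    have hnat : (∏ p : ↥S, ((p : Nat.Primes) : ℕ) ^ g p)
        = ∏ p : ↥S, ((p : Nat.Primes) : ℕ) ^ h p := by
      have hlog : ∀ f : ↥S → ℕ,
          Real.log ((∏ p : ↥S, ((p : Nat.Primes) : ℕ) ^ f p : ℕ) : ℝ) = lam f := by
        intro f
        push_cast
        rw [Real.log_prod]
        · exact Finset.sum_congr rfl fun p _ => by rw [Real.log_pow]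
        · intro p _
          have : (2 : ℝ) ≤ (((p : Nat.Primes) : ℕ) : ℝ) := by
            exact_mod_cast (p : Nat.Primes).2.two_le
          positivity
      have hpos : ∀ f : ↥S → ℕ,
          (0 : ℝ) < ((∏ p : ↥S, ((p : Nat.Primes) : ℕ) ^ f p : ℕ) : ℝ) := by
        intro f
        have : 0 < ∏ p : ↥S, ((p : Nat.Primes) : ℕ) ^ f p :=
          Finset.prod_pos fun p _ => pow_pos (p : Nat.Primes).2.pos _
        exact_mod_cast this
      have := Real.log_injOn_pos (Set.mem_Ioi.mpr (hpos g)) (Set.mem_Ioi.mpr (hpos h))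
        (by rw [hlog g, hlog h]; exact hgh)
      exact_mod_cast this
    funext q
    have hfact : ∀ f : ↥S → ℕ,
        (∏ p : ↥S, ((p : Nat.Primes) : ℕ) ^ f p).factorization ((q : Nat.Primes) : ℕ)
          = f q := by
      intro f
      rw [show (∏ p : ↥S, ((p : Nat.Primes) : ℕ) ^ f p).factorization
          = ∑ p : ↥S, (((p : Nat.Primes) : ℕ) ^ f p).factorization from
        Nat.factorization_prod (fun p _ => (pow_pos (p : Nat.Primes).2.pos _).ne')]
      have h2 : ∀ p : ↥S, (((p : Nat.Primes) : ℕ) ^ f p).factorization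
          = Finsupp.single ((p : Nat.Primes) : ℕ) (f p) :=
        fun p => (p : Nat.Primes).2.factorization_pow
      rw [Finset.sum_congr rfl fun p _ => h2 p]
      rw [Finsupp.finset_sum_apply]
      rw [Finset.sum_eq_single_of_mem q (Finset.mem_univ q)]
      · exact Finsupp.single_eq_same
      · intro p _ hpq
        apply Finsupp.single_eq_of_ne
        intro hc
        exact hpq (Subtype.coe_injective (Nat.Primes.coe_nat_injective hc.symm))
    have := hfact g
    rw [hnat, hfact h] at this
    exact this.symm
  -- Step D : coefficient bound
  have hkey : ∀ m : ℕ, ((Nat.centralBinom m : ℝ)) ^ k ≤ M ^ (2 * m) := by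
    intro m
    set N := 2 * m with hN
    set c : (↥S → ℕ) → ℂ :=
      fun g => ∏ p : ↥S, ((-1 : ℂ) ^ g p * (N.choose (g p) : ℂ)) with hc
    have hMbound : ∀ t : ℝ,
        ‖∑ g ∈ Fintype.piFinset (fun _ : ↥S => Finset.range (N + 1)),
          c g * Complex.exp ((lam g : ℂ) * t * Complex.I)‖ ≤ M ^ N := by
      intro t
      rw [← hexp N t, norm_pow]
      exact pow_le_pow_left₀ (norm_nonneg _) (hfM t) N
    have hmem : (fun _ : ↥S => m) ∈ Fintype.piFinset (fun _ : ↥S => Finset.range (N + 1)) := by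
      rw [Fintype.mem_piFinset]
      intro p
      rw [Finset.mem_range]
      omega
    have hcb := coeff_bound _ lam (hinj N) c hMbound hmem
    have hcnorm : ‖c (fun _ : ↥S => m)‖ = (Nat.centralBinom m : ℝ) ^ k := by
      rw [hc]
      rw [norm_prod]
      have : ∀ p : ↥S, ‖(-1 : ℂ) ^ m * (N.choose m : ℂ)‖ = (Nat.centralBinom m : ℝ) := by
        intro p
        rw [norm_mul, norm_pow, norm_neg, norm_one, one_pow, one_mul,
          Complex.norm_natCast, hN, Nat.centralBinom]
      rw [Finset.prod_congr rfl fun p _ => this p, Finset.prod_const, Finset.card_univ,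
        Fintype.card_coe]
    rw [hcnorm] at hcb
    exact hcb
  -- Step E : asymptotic contradiction
  set r : ℝ := (4 - ε ^ 2) / 4 with hr
  have hr0 : 0 ≤ r := by positivity
  have hr1 : r < 1 := by rw [hr]; nlinarith
  have hone : ∀ m : ℕ, (1 : ℝ) ≤ (2 * (m : ℝ) + 1) ^ k * r ^ m := by
    intro m
    have hcbN : (4 : ℕ) ^ m ≤ (2 * m + 1) * Nat.centralBinom m := by
      calc (4:ℕ) ^ m = 2 ^ (2 * m) := by rw [pow_mul]; norm_num
        _ = ∑ i ∈ Finset.range (2 * m + 1), (2 * m).choose i :=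
            (Nat.sum_range_choose (2 * m)).symm
        _ ≤ ∑ _i ∈ Finset.range (2 * m + 1), Nat.centralBinom m := by
            apply Finset.sum_le_sum
            intro i _
            have h5 := Nat.choose_le_middle i (2 * m)
            simpa [Nat.centralBinom, Nat.mul_div_cancel_left m (by norm_num : 0 < 2)]
              using h5
        _ = (2 * m + 1) * Nat.centralBinom m := by
            rw [Finset.sum_const, Finset.card_range, smul_eq_mul]
    have h1 : (4 : ℝ) ^ m ≤ (2 * (m : ℝ) + 1) * (Nat.centralBinom m : ℝ) := by
      exact_mod_cast hcbN
    have h2 := hkey m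
    have hM2m : M ^ (2 * m) = (4 - ε ^ 2) ^ m * 4 ^ (m * (k - 1)) := by
      rw [hM, mul_pow]
      congr 1
      · rw [pow_mul, Real.sq_sqrt h4ε]
      · rw [← pow_mul]
        rw [show (k - 1) * (2 * m) = 2 * (m * (k - 1)) by ring]
        rw [pow_mul]
        norm_num
    -- raise h1 to the k-th power
    have h3 : ((4 : ℝ) ^ m) ^ k ≤ ((2 * (m : ℝ) + 1) * (Nat.centralBinom m : ℝ)) ^ k := by
      apply pow_le_pow_left₀ (by positivity) h1
    have h4 : ((4 : ℝ) ^ m) ^ k ≤ (2 * (m : ℝ) + 1) ^ k * ((4 - ε ^ 2) ^ m * 4 ^ (m * (k - 1))) := by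
      calc ((4 : ℝ) ^ m) ^ k ≤ ((2 * (m : ℝ) + 1) * (Nat.centralBinom m : ℝ)) ^ k := h3
        _ = (2 * (m : ℝ) + 1) ^ k * (Nat.centralBinom m : ℝ) ^ k := mul_pow _ _ _
        _ ≤ (2 * (m : ℝ) + 1) ^ k * ((4 - ε ^ 2) ^ m * 4 ^ (m * (k - 1))) := by
            rw [← hM2m]
            exact mul_le_mul_of_nonneg_left h2 (by positivity)
    have hmk : m * k = m + m * (k - 1) := by
      conv_lhs => rw [show k = 1 + (k - 1) from by omega]
      ring
    have h5 : ((4 : ℝ) ^ m) ^ k = 4 ^ m * 4 ^ (m * (k - 1)) := by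
      rw [← pow_mul, hmk, pow_add]
    rw [h5] at h4
    have h6 : (0 : ℝ) < 4 ^ (m * (k - 1)) := by positivity
    have h7 : (4 : ℝ) ^ m ≤ (2 * (m : ℝ) + 1) ^ k * (4 - ε ^ 2) ^ m := by
      have := (mul_le_mul_iff_of_pos_right h6).mp (by linarith [h4] :
        4 ^ m * 4 ^ (m * (k - 1)) ≤ ((2 * (m : ℝ) + 1) ^ k * (4 - ε ^ 2) ^ m) * 4 ^ (m * (k - 1)))
      exact this
    have h8 : (0 : ℝ) < 4 ^ m := by positivity
    have h9 : (2 * (m : ℝ) + 1) ^ k * ((4 - ε ^ 2) ^ m / 4 ^ m)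
        = ((2 * (m : ℝ) + 1) ^ k * (4 - ε ^ 2) ^ m) / 4 ^ m := by ring
    rw [hr, div_pow, h9, le_div_iff₀ h8, one_mul]
    exact h7
  -- tendsto contradiction
  have hsum : Summable (fun n : ℕ => (n : ℝ) ^ k * r ^ n) :=
    summable_pow_mul_geometric_of_norm_lt_one k
      (by rw [Real.norm_eq_abs, _root_.abs_of_nonneg hr0]; exact hr1)
  have htend0 : Filter.Tendsto (fun n : ℕ => (n : ℝ) ^ k * r ^ n) Filter.atTop (nhds 0) :=
    hsum.tendsto_atTop_zero
  have htend : Filter.Tendsto (fun m : ℕ => (2 * (m : ℝ) + 1) ^ k * r ^ m)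
      Filter.atTop (nhds 0) := by
    apply squeeze_zero'
    · filter_upwards with m
      positivity
    · filter_upwards [Filter.eventually_ge_atTop 1] with m hm
      have h1m : (1:ℝ) ≤ (m:ℝ) := by exact_mod_cast hm
      have hle : (2 * (m : ℝ) + 1) ^ k ≤ (3 : ℝ) ^ k * (m : ℝ) ^ k := by
        rw [← mul_pow]
        apply pow_le_pow_left₀ (by positivity)
        linarith
      calc (2 * (m : ℝ) + 1) ^ k * r ^ m ≤ (3 ^ k * (m:ℝ) ^ k) * r ^ m :=
            mul_le_mul_of_nonneg_right hle (by positivity)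
        _ = 3 ^ k * ((m:ℝ) ^ k * r ^ m) := by ring
    · simpa using htend0.const_mul ((3:ℝ) ^ k)
  have hev : ∀ᶠ m : ℕ in Filter.atTop, (2 * (m : ℝ) + 1) ^ k * r ^ m < 1 :=
    htend.eventually_lt_const (by norm_num : (0:ℝ) < 1)
  obtain ⟨m, hm⟩ := hev.exists
  exact absurd (hone m) (not_le.mpr hm)


set_option maxHeartbeats 2000000 in
theorem one_div_zeta_unbounded :
    ∀ C : ℝ, 0 < C → ∃ s : ℂ, 1 < s.re ∧ C < ‖1 / riemannZeta s‖ := by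
  intro C hC
  set B : ℝ := 8 * max (Real.log C) 0 + 16 with hB
  have hmax0 : (0:ℝ) ≤ max (Real.log C) 0 := le_max_right _ _
  have hmaxC : Real.log C ≤ max (Real.log C) 0 := le_max_left _ _
  have hB16 : (16:ℝ) ≤ B := by rw [hB]; linarith
  -- Step 1 : a finite set of primes with large reciprocal sum
  obtain ⟨S₀, hS₀⟩ : ∃ S₀ : Finset Nat.Primes, B < ∑ p ∈ S₀, (1 / (p : ℕ) : ℝ) := by
    by_contra h
    push_neg at h
    exact Nat.Primes.not_summable_one_div
      (summable_of_sum_le (fun p => by positivity) h)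
  have hS₀ne : S₀.Nonempty := by
    rcases S₀.eq_empty_or_nonempty with h | h
    · rw [h] at hS₀; simp at hS₀; linarith
    · exact h
  -- Step 2 : choice of σ
  set X : ℕ := S₀.sup (fun p => (p : ℕ)) with hX
  have hX2 : 2 ≤ X := by
    obtain ⟨p₁, hp₁⟩ := hS₀ne
    exact le_trans p₁.2.two_le (Finset.le_sup hp₁)
  have hlogX : 0 < Real.log X := Real.log_pos (by exact_mod_cast hX2)
  set d : ℝ := Real.log 2 / Real.log X with hd
  have hd0 : 0 ≤ d := by positivity
  set σ : ℝ := 1 + d with hσdef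
  have hσ1 : 1 < σ := by
    rw [hσdef]
    have : 0 < d := by rw [hd]; positivity
    linarith
  set g : Nat.Primes → ℝ := fun p => ((p : ℕ) : ℝ) ^ (-σ) with hg
  have hppos : ∀ p : Nat.Primes, (0:ℝ) < ((p:ℕ):ℝ) := fun p => by
    exact_mod_cast p.2.pos
  have hp2 : ∀ p : Nat.Primes, (2:ℝ) ≤ ((p:ℕ):ℝ) := fun p => by exact_mod_cast p.2.two_le
  have hgpos : ∀ p : Nat.Primes, 0 < g p := fun p => Real.rpow_pos_of_pos (hppos p) _
  -- lower bound for g on S₀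
  have hglow : ∀ p ∈ S₀, (1/2) * (1 / ((p:ℕ):ℝ)) ≤ g p := by
    intro p hp
    have hlogp : 0 < Real.log ((p:ℕ):ℝ) := Real.log_pos (by linarith [hp2 p])
    have hpX : ((p:ℕ):ℝ) ≤ (X:ℝ) := by
      have h := Finset.le_sup (f := fun q : Nat.Primes => (q : ℕ)) hp
      exact_mod_cast h
    have hlogpX : Real.log ((p:ℕ):ℝ) ≤ Real.log (X:ℝ) :=
      Real.log_le_log (hppos p) hpX
    have hdp : d * Real.log ((p:ℕ):ℝ) ≤ Real.log 2 := by
      rw [hd, div_mul_eq_mul_div, mul_comm]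
      rw [div_le_iff₀ hlogX]
      calc Real.log ((p:ℕ):ℝ) * Real.log 2 = Real.log 2 * Real.log ((p:ℕ):ℝ) := mul_comm _ _
        _ ≤ Real.log 2 * Real.log (X:ℝ) :=
            mul_le_mul_of_nonneg_left hlogpX (Real.log_nonneg (by norm_num : (1:ℝ) ≤ 2))
    have hpd : ((p:ℕ):ℝ) ^ d ≤ 2 := by
      rw [Real.rpow_def_of_pos (hppos p)]
      calc Real.exp (Real.log ((p:ℕ):ℝ) * d) ≤ Real.exp (Real.log 2) := by
            apply Real.exp_le_exp.mpr
            rw [mul_comm]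
            exact hdp
        _ = 2 := Real.exp_log (by norm_num)
    have : g p = (1 / ((p:ℕ):ℝ)) * (((p:ℕ):ℝ) ^ d)⁻¹ := by
      rw [hg]
      simp only
      rw [show -σ = (-1) + (-d) by rw [hσdef]; ring, Real.rpow_add (hppos p),
        Real.rpow_neg_one, Real.rpow_neg (hppos p).le]
      rw [one_div]
    rw [this]
    have h2 : (1/2 : ℝ) ≤ (((p:ℕ):ℝ) ^ d)⁻¹ := by
      rw [one_div]
      exact inv_anti₀ (Real.rpow_pos_of_pos (hppos p) d) hpd
    calc (1/2) * (1 / ((p:ℕ):ℝ)) ≤ (((p:ℕ):ℝ) ^ d)⁻¹ * (1 / ((p:ℕ):ℝ)) := by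
          apply mul_le_mul_of_nonneg_right h2 (by positivity)
      _ = (1 / ((p:ℕ):ℝ)) * (((p:ℕ):ℝ) ^ d)⁻¹ := mul_comm _ _
  have hgS₀ : B / 2 < ∑ p ∈ S₀, g p := by
    calc B / 2 < (∑ p ∈ S₀, (1 / (p : ℕ) : ℝ)) / 2 := by linarith
      _ = ∑ p ∈ S₀, (1/2) * (1 / ((p:ℕ):ℝ)) := by
          rw [Finset.sum_div]
          exact Finset.sum_congr rfl fun p _ => by ring
      _ ≤ ∑ p ∈ S₀, g p := Finset.sum_le_sum hglow
  -- Step 3 : summability and the tail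
  have hg_sum : Summable g := Nat.Primes.summable_rpow.mpr (by linarith)
  have hev : ∀ᶠ u : Finset Nat.Primes in Filter.atTop,
      (∑' p, g p) - 1/8 < ∑ p ∈ u, g p :=
    hg_sum.hasSum.eventually (eventually_gt_nhds (by linarith))
  obtain ⟨S₁, hS₁⟩ := Filter.eventually_atTop.mp hev
  set S : Finset Nat.Primes := S₀ ∪ S₁ with hS
  have htail : ∑' (p : ↑((S : Set Nat.Primes))ᶜ), g ↑p < 1/8 := by
    have h1 := Summable.sum_add_tsum_compl (s := S) hg_sum
    have h2 := hS₁ S (by rw [hS]; exact Finset.subset_union_right)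
    linarith
  -- Step 4 : Kronecker
  obtain ⟨t, ht⟩ := kronecker S (by norm_num : (0:ℝ) < 1/2)
  -- the point s
  set s : ℂ := ⟨σ, t⟩ with hsdef
  have hsre : s.re = σ := rfl
  have hs1 : 1 < s.re := by rw [hsre]; exact hσ1
  refine ⟨s, hs1, ?_⟩
  -- basic facts about z p := p^{-s}
  have hcoe : ∀ p : Nat.Primes, ((p:ℕ):ℂ) ≠ 0 := fun p => by
    exact_mod_cast (hppos p).ne'
  have hznorm : ∀ p : Nat.Primes, ‖((p:ℕ):ℂ) ^ (-s)‖ = g p := by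
    intro p
    rw [Complex.norm_natCast_cpow_of_pos p.2.pos, hg]
    congr 1
  have hghalf : ∀ p : Nat.Primes, g p ≤ 1/2 := by
    intro p
    have h1 : g p ≤ ((p:ℕ):ℝ) ^ (-1 : ℝ) := by
      rw [hg]
      apply Real.rpow_le_rpow_of_exponent_le (by linarith [hp2 p])
      linarith
    have h2 : ((p:ℕ):ℝ) ^ (-1 : ℝ) = 1 / ((p:ℕ):ℝ) := by
      rw [Real.rpow_neg_one, one_div]
    have h3 : (1:ℝ) / ((p:ℕ):ℝ) ≤ 1/2 := by
      apply div_le_div_of_nonneg_left (by norm_num) (by norm_num) (hp2 p)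
    linarith
  -- the real part of z p
  have hzre : ∀ p : Nat.Primes,
      (((p:ℕ):ℂ) ^ (-s)).re = g p * Real.cos (Real.log ((p:ℕ):ℝ) * t) := by
    intro p
    rw [Complex.cpow_def_of_ne_zero (hcoe p)]
    have hlog : Complex.log ((p:ℕ):ℂ) = ((Real.log ((p:ℕ):ℝ) : ℝ) : ℂ) := by
      rw [show ((p:ℕ):ℂ) = (((p:ℕ):ℝ):ℂ) by push_cast; ring]
      exact (Complex.ofReal_log (hppos p).le).symm
    rw [hlog, Complex.exp_re]
    have hsim : s.im = t := rfl
    have hre : (((Real.log ((p:ℕ):ℝ) : ℝ) : ℂ) * (-s)).re = -(Real.log ((p:ℕ):ℝ) * σ) := by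
      rw [Complex.mul_re]
      simp only [Complex.ofReal_re, Complex.ofReal_im, Complex.neg_re, Complex.neg_im,
        hsre, hsim]
      ring
    have him : (((Real.log ((p:ℕ):ℝ) : ℝ) : ℂ) * (-s)).im = -(Real.log ((p:ℕ):ℝ) * t) := by
      rw [Complex.mul_im]
      simp only [Complex.ofReal_re, Complex.ofReal_im, Complex.neg_re, Complex.neg_im,
        hsre, hsim]
      ring
    rw [hre, him, Real.cos_neg]
    congr 1
    rw [hg]
    simp only
    rw [Real.rpow_def_of_pos (hppos p)]
    congr 1
    ring
  -- the cosine bound from Kronecker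
  have hcos : ∀ p ∈ S, Real.cos (Real.log ((p:ℕ):ℝ) * t) < -(7/8) := by
    intro p hp
    have h1 := ht p hp
    have h2 : (Real.log ((p:ℕ):ℝ) : ℂ) * (t:ℂ) * Complex.I
        = ((Real.log ((p:ℕ):ℝ) * t : ℝ) : ℂ) * Complex.I := by
      rw [Complex.ofReal_mul]
    rw [h2] at h1
    set θ : ℝ := Real.log ((p:ℕ):ℝ) * t with hθ
    have h3 : ‖Complex.exp ((θ:ℂ) * Complex.I) + 1‖ ^ 2 = 2 + 2 * Real.cos θ := by
      rw [Complex.exp_mul_I]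
      have h4 : Complex.cos (θ:ℂ) + Complex.sin (θ:ℂ) * Complex.I + 1
          = ((Real.cos θ + 1 : ℝ) : ℂ) + ((Real.sin θ : ℝ) : ℂ) * Complex.I := by
        rw [← Complex.ofReal_cos, ← Complex.ofReal_sin]
        push_cast
        ring
      rw [h4, Complex.sq_norm, Complex.normSq_add_mul_I]
      nlinarith [Real.sin_sq_add_cos_sq θ]
    have h5 : ‖Complex.exp ((θ:ℂ) * Complex.I) + 1‖ ^ 2 < (1/2) ^ 2 := by
      apply pow_lt_pow_left₀ h1 (norm_nonneg _)
      norm_num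
    rw [h3] at h5
    nlinarith
  -- the log series
  set F : Nat.Primes → ℂ := fun p => -Complex.log (1 - ((p:ℕ):ℂ) ^ (-s)) with hF
  have hlogb : ∀ p : Nat.Primes, ‖F p‖ ≤ (3/2) * g p := by
    intro p
    rw [hF]
    simp only [norm_neg]
    have h1 : (1 : ℂ) - ((p:ℕ):ℂ) ^ (-s) = 1 + (-(((p:ℕ):ℂ) ^ (-s))) := by ring
    rw [h1]
    have h2 : ‖-(((p:ℕ):ℂ) ^ (-s))‖ ≤ 1/2 := by
      rw [norm_neg, hznorm]
      exact hghalf p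
    calc ‖Complex.log (1 + (-(((p:ℕ):ℂ) ^ (-s))))‖
        ≤ (3/2) * ‖-(((p:ℕ):ℂ) ^ (-s))‖ := Complex.norm_log_one_add_half_le_self h2
      _ = (3/2) * g p := by rw [norm_neg, hznorm]
  have hF_sum : Summable F :=
    Summable.of_norm_bounded (hg_sum.mul_left (3/2)) hlogb
  have hG_sum : Summable (fun p => (F p).re) := (Complex.hasSum_re hF_sum.hasSum).summable
  -- zeta value
  have hzeta := riemannZeta_eulerProduct_exp_log hs1
  have hζnorm : ‖riemannZeta s‖ = Real.exp (∑' p : Nat.Primes, (F p).re) := by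
    rw [← hzeta, Complex.norm_exp]
    congr 1
    exact Complex.re_tsum hF_sum
  -- main bound on S
  have hmain : ∀ p ∈ S, (F p).re ≤ -(3/8) * g p := by
    intro p hp
    set z : ℂ := ((p:ℕ):ℂ) ^ (-s) with hz
    have hz2 : ‖-z‖ ≤ 1/2 := by rw [norm_neg, hz, hznorm]; exact hghalf p
    have hkey : ‖Complex.log (1 - z) + z‖ ≤ g p * g p := by
      have h1 := Complex.norm_log_one_add_sub_self_le (z := -z) (by
        rw [norm_neg, hz, hznorm]; linarith [hghalf p] )
      have h2 : (1 : ℂ) + (-z) = 1 - z := by ring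
      rw [h2, sub_neg_eq_add] at h1
      have h3 : ‖-z‖ = g p := by rw [norm_neg, hz, hznorm]
      rw [h3] at h1
      calc ‖Complex.log (1 - z) + z‖ ≤ g p ^ 2 * (1 - g p)⁻¹ / 2 := h1
        _ ≤ g p * g p := by
            have hg1 : (1 - g p)⁻¹ ≤ 2 := by
              rw [inv_le_comm₀ (by linarith [hghalf p, hgpos p]) (by norm_num)]
              linarith [hghalf p]
            have := hgpos p
            nlinarith
    have hre1 : (F p).re = -((Complex.log (1 - z) + z).re) + z.re := by
      rw [hF]
      simp only [hz, Complex.neg_re, Complex.add_re]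
      ring
    have hre2 : -((Complex.log (1 - z) + z).re) ≤ g p * g p := by
      calc -((Complex.log (1 - z) + z).re) = (-(Complex.log (1 - z) + z)).re := by
            rw [Complex.neg_re]
        _ ≤ ‖-(Complex.log (1 - z) + z)‖ := Complex.re_le_norm _
        _ = ‖Complex.log (1 - z) + z‖ := norm_neg _
        _ ≤ g p * g p := hkey
    have hre3 : z.re ≤ -(7/8) * g p := by
      rw [hz, hzre]
      have := hcos p hp
      have hgc := hgpos p
      nlinarith
    have hgg : g p * g p ≤ (1/2) * g p := by
      have := hgpos p
      nlinarith [hghalf p]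
    rw [hre1]
    linarith
  -- tail bound
  have htailF : ∑' (p : ↑((S : Set Nat.Primes))ᶜ), (F ↑p).re ≤ 3/16 := by
    have hb : ∀ p : ↑((S : Set Nat.Primes))ᶜ, (F ↑p).re ≤ (3/2) * g ↑p := by
      intro p
      calc (F ↑p).re ≤ ‖F ↑p‖ := Complex.re_le_norm _
        _ ≤ (3/2) * g ↑p := hlogb ↑p
    calc ∑' (p : ↑((S : Set Nat.Primes))ᶜ), (F ↑p).re
        ≤ ∑' (p : ↑((S : Set Nat.Primes))ᶜ), (3/2) * g ↑p := by
          apply Summable.tsum_le_tsum hb (hG_sum.subtype _) ((hg_sum.mul_left (3/2)).subtype _)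
      _ = (3/2) * ∑' (p : ↑((S : Set Nat.Primes))ᶜ), g ↑p := by
          rw [tsum_mul_left]
      _ ≤ 3/16 := by nlinarith [htail,
          tsum_nonneg (L := SummationFilter.unconditional _) (fun p : ↑((S : Set Nat.Primes))ᶜ => (hgpos ↑p).le)]
  -- main sum bound
  have hSsum : ∑ p ∈ S, (F p).re ≤ -(3/16) * B := by
    have h1 : ∑ p ∈ S, (F p).re ≤ ∑ p ∈ S, (-(3/8) * g p) := Finset.sum_le_sum hmain
    have h2 : ∑ p ∈ S, (-(3/8) * g p) = -(3/8) * ∑ p ∈ S, g p := by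
      rw [Finset.mul_sum]
    have h3 : B / 2 ≤ ∑ p ∈ S, g p := by
      calc B / 2 ≤ ∑ p ∈ S₀, g p := hgS₀.le
        _ ≤ ∑ p ∈ S, g p := Finset.sum_le_sum_of_subset_of_nonneg
            (by rw [hS]; exact Finset.subset_union_left) (fun p _ _ => (hgpos p).le)
    calc ∑ p ∈ S, (F p).re ≤ -(3/8) * ∑ p ∈ S, g p := by rw [← h2]; exact h1
      _ ≤ -(3/8) * (B / 2) := by nlinarith
      _ = -(3/16) * B := by ring
  -- total bound
  have htotal : ∑' p : Nat.Primes, (F p).re ≤ -(Real.log C) - 2 := by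
    have hsplit := Summable.sum_add_tsum_compl (s := S) hG_sum
    have : ∑' p : Nat.Primes, (F p).re ≤ -(3/16) * B + 3/16 := by
      rw [← hsplit]
      exact add_le_add hSsum htailF
    rw [hB] at this
    nlinarith
  -- conclusion
  have hζle : ‖riemannZeta s‖ ≤ Real.exp (-(Real.log C) - 2) := by
    rw [hζnorm]
    exact Real.exp_le_exp.mpr htotal
  have hexpC : Real.exp (-(Real.log C) - 2) < 1 / C := by
    have h1 : Real.exp (-(Real.log C) - 2) < Real.exp (-(Real.log C)) :=
      Real.exp_lt_exp.mpr (by linarith)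
    have h2 : Real.exp (-(Real.log C)) = 1 / C := by
      rw [Real.exp_neg, Real.exp_log hC, one_div]
    linarith
  have hζlt : ‖riemannZeta s‖ < 1 / C := lt_of_le_of_lt hζle hexpC
  have hζne : riemannZeta s ≠ 0 := riemannZeta_ne_zero_of_one_lt_re hs1
  have hζpos : 0 < ‖riemannZeta s‖ := norm_pos_iff.mpr hζne
  rw [norm_div, norm_one]
  rw [lt_div_iff₀ hζpos]
  calc C * ‖riemannZeta s‖ < C * (1 / C) :=
        mul_lt_mul_of_pos_left hζlt hC
    _ = 1 := by field_simp
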